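/- Let A and K be small categories and F : A ⥤ K an essentially surjective functor. Then the restriction functor F* : Pr(K) ⥤ Pr(A), given by precomposition with Fᵒᵖ, is a monadic right adjoint: it admits a left adjoint (left Kan extension along Fᵒᵖ), it is conservative, and the comparison functor from Pr(K) to the Eilenberg–Moore category of the induced monad on Pr(A) is an equivalence. -/

import Mathlib

open CategoryTheory

open CategoryTheory.Limits in
lemma whiskeringLeft_reflectsIso_of_essSurj {A K : Type u} [SmallCategory A] [SmallCategory K]
    (F : A ⥤ K) (hF : F.EssSurj) :
    ((Functor.whiskeringLeft Aᵒᵖ Kᵒᵖ (Type u)).obj F.op).ReflectsIsomorphisms := by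
  constructor
  intro X Y f h
  rw [NatTrans.isIso_iff_isIso_app] at *
  intro k
  obtain ⟨a, ⟨e⟩⟩ := hF.mem_essImage k.unop
  have i : k ≅ Opposite.op (F.obj a) := (Opposite.op_unop k) ▸ e.op
  have : f.app k = X.map i.hom ≫ f.app (Opposite.op (F.obj a)) ≫ Y.map i.inv := by
    rw [f.naturality_assoc, ← Y.map_comp, i.hom_inv_id, Y.map_id, Category.comp_id]
  rw [this]
  have : IsIso (f.app (Opposite.op (F.obj a))) := h (Opposite.op a)
  infer_instance

/-- key step of the paper's Prop:Monadic, 1-categorical form: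
If `F : A ⥤ K` is an essentially surjective functor between small categories,
then the restriction functor `F* : Pr(K) ⥤ Pr(A)` (precomposition with `Fᵒᵖ`)
is a monadic right adjoint. -/
theorem stmt_4 {A K : Type u} [SmallCategory A] [SmallCategory K]
    (F : A ⥤ K) (hF : F.EssSurj) :
    Nonempty (MonadicRightAdjoint
      ((Functor.whiskeringLeft Aᵒᵖ Kᵒᵖ (Type u)).obj F.op)) := by
  have : ((Functor.whiskeringLeft Aᵒᵖ Kᵒᵖ (Type u)).obj F.op).ReflectsIsomorphisms :=
    whiskeringLeft_reflectsIso_of_essSurj F hF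
  have : Monad.PreservesColimitOfIsReflexivePair
      ((Functor.whiskeringLeft Aᵒᵖ Kᵒᵖ (Type u)).obj F.op) := ⟨fun _ _ _ _ _ => inferInstance⟩
  exact ⟨Monad.monadicOfHasPreservesReflexiveCoequalizersOfReflectsIsomorphisms
    (F.op.lanAdjunction (Type u))⟩
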